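/- (Hybrid KL reduction.) Let (Θ₁, μ₁) and (Θ₂, μ₂) be σ-finite measure spaces, let π₁₂ : Θ₁ × Θ₂ → ℝ be a probability density with respect to μ₁ ⊗ μ₂ (the joint posterior density of (θ₁, θ₂)), and let π₁(θ₁) := ∫ π₁₂(θ₁, θ₂) dμ₂(θ₂) be its marginal, with 0 < π₁(θ₁) for q-a.e. θ₁; set c(θ₂ | θ₁) := π₁₂(θ₁, θ₂) / π₁(θ₁). Let q be a probability density on Θ₁ with respect to μ₁ such that θ₁ ↦ q(θ₁) log(q(θ₁)/π₁(θ₁)) is μ₁-integrable. Then the Kullback–Leibler divergence from the hybrid density (θ₁, θ₂) ↦ q(θ₁) c(θ₂ | θ₁) to π₁₂ equals the Kullback–Leibler divergence from q to π₁: ∫∫ q(θ₁) c(θ₂|θ₁) log[ q(θ₁) c(θ₂|θ₁) / π₁₂(θ₁, θ₂) ] dμ₂ dμ₁ = ∫ q(θ₁) log[ q(θ₁) / π₁(θ₁) ] dμ₁. -/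

import Mathlib

open MeasureTheory Real

/-- Hybrid KL reduction: the KL divergence from the hybrid density
q(θ₁)·c(θ₂|θ₁) (with c the exact conditional of the joint posterior π₁₂) to π₁₂
equals the KL divergence from q to the θ₁-marginal π₁. -/
theorem hybrid_kl_reduction
    {Θ₁ Θ₂ : Type*} [MeasurableSpace Θ₁] [MeasurableSpace Θ₂]
    (μ₁ : Measure Θ₁) (μ₂ : Measure Θ₂) [SigmaFinite μ₁] [SigmaFinite μ₂]
    (π₁₂ : Θ₁ × Θ₂ → ℝ) (hmeas : Measurable π₁₂) (hnonneg : ∀ x, 0 ≤ π₁₂ x)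
    (hprob : ∫ x, π₁₂ x ∂(μ₁.prod μ₂) = 1)
    (π₁ : Θ₁ → ℝ) (hπ₁ : π₁ = fun θ₁ => ∫ θ₂, π₁₂ (θ₁, θ₂) ∂μ₂)
    (q : Θ₁ → ℝ) (hq_meas : Measurable q) (hq_nonneg : ∀ θ₁, 0 ≤ q θ₁)
    (hq_prob : ∫ θ₁, q θ₁ ∂μ₁ = 1)
    (hpos : ∀ᵐ θ₁ ∂(μ₁.withDensity fun θ₁ => ENNReal.ofReal (q θ₁)), 0 < π₁ θ₁)
    (c : Θ₁ → Θ₂ → ℝ) (hc : c = fun θ₁ θ₂ => π₁₂ (θ₁, θ₂) / π₁ θ₁)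
    (h_int : Integrable (fun θ₁ => q θ₁ * Real.log (q θ₁ / π₁ θ₁)) μ₁) :
    ∫ θ₁, ∫ θ₂, q θ₁ * c θ₁ θ₂ *
        Real.log (q θ₁ * c θ₁ θ₂ / π₁₂ (θ₁, θ₂)) ∂μ₂ ∂μ₁
      = ∫ θ₁, q θ₁ * Real.log (q θ₁ / π₁ θ₁) ∂μ₁ := by
  have hpos' : ∀ᵐ θ₁ ∂μ₁, (ENNReal.ofReal (q θ₁)) ≠ 0 → 0 < π₁ θ₁ := by
    rw [← ae_withDensity_iff (by measurability)]
    exact hpos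
  refine integral_congr_ae ?_
  filter_upwards [hpos'] with θ₁ hθ₁
  by_cases hq0 : q θ₁ = 0
  · simp [hq0]
  · have hqpos : 0 < q θ₁ := lt_of_le_of_ne (hq_nonneg θ₁) (Ne.symm hq0)
    have hπ₁pos : 0 < π₁ θ₁ := hθ₁ (by simp [hqpos])
    have hπ₁ne : π₁ θ₁ ≠ 0 := ne_of_gt hπ₁pos
    have hinner : ∀ θ₂, q θ₁ * c θ₁ θ₂ *
        Real.log (q θ₁ * c θ₁ θ₂ / π₁₂ (θ₁, θ₂))
        = (q θ₁ / π₁ θ₁ * Real.log (q θ₁ / π₁ θ₁)) * π₁₂ (θ₁, θ₂) := by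
      intro θ₂
      by_cases h0 : π₁₂ (θ₁, θ₂) = 0
      · simp [hc, h0]
      · have harg : q θ₁ * c θ₁ θ₂ / π₁₂ (θ₁, θ₂) = q θ₁ / π₁ θ₁ := by
          rw [hc]
          field_simp
        rw [harg, hc]
        field_simp
    calc ∫ θ₂, q θ₁ * c θ₁ θ₂ * Real.log (q θ₁ * c θ₁ θ₂ / π₁₂ (θ₁, θ₂)) ∂μ₂
        = ∫ θ₂, (q θ₁ / π₁ θ₁ * Real.log (q θ₁ / π₁ θ₁)) * π₁₂ (θ₁, θ₂) ∂μ₂ := by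
          exact integral_congr_ae (Filter.Eventually.of_forall hinner)
      _ = (q θ₁ / π₁ θ₁ * Real.log (q θ₁ / π₁ θ₁)) * π₁ θ₁ := by
          rw [integral_const_mul, hπ₁]
      _ = q θ₁ * Real.log (q θ₁ / π₁ θ₁) := by
          field_simp
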